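/- For every graph G, pn_ℓ(G) ≤ mad(G)/2 + 2 and pn_u(G) ≤ mad(G) + 2. -/

import Mathlib

open SimpleGraph

/-- Two edges `e₁ = s(a,c)` and `e₂ = s(b,d)` cross with respect to the spine
position function `pos` if `a ≺ b ≺ c ≺ d`. -/
def Crosses {V : Type*} (pos : V → ℕ) (e₁ e₂ : Sym2 V) : Prop :=
  ∃ a b c d : V, e₁ = s(a, c) ∧ e₂ = s(b, d) ∧
    pos a < pos b ∧ pos b < pos c ∧ pos c < pos d

/-- A linear embedding of `G`: an (injective) spine position function together with
an assignment of edges to pages (indexed by naturals). -/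
structure LinearEmbedding {V : Type*} (G : SimpleGraph V) where
  pos : V → ℕ
  inj : Function.Injective pos
  page : Sym2 V → ℕ

namespace LinearEmbedding

variable {V : Type*} {G : SimpleGraph V} (L : LinearEmbedding G)

/-- The set of indices of nonempty pages. -/
def pages : Set ℕ := {i | ∃ e ∈ G.edgeSet, L.page e = i}

/-- The number of (nonempty) pages. -/
noncomputable def pageCount : ℕ := L.pages.ncard

/-- The set of pages having an edge incident to `v`. -/
def pagesAt (v : V) : Set ℕ := {i | ∃ e ∈ G.edgeSet, v ∈ e ∧ L.page e = i}

/-- The subgraph of `G` formed by the edges on page `i`. -/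
def pageGraph (i : ℕ) : SimpleGraph V :=
  fromEdgeSet {e | e ∈ G.edgeSet ∧ L.page e = i}

/-- The set of vertices incident to an edge on page `i`. -/
def pageVerts (i : ℕ) : Set V := {v | ∃ e ∈ G.edgeSet, L.page e = i ∧ v ∈ e}

/-- The set of edges on page `i`. -/
def pageEdges (i : ℕ) : Set (Sym2 V) := {e | e ∈ G.edgeSet ∧ L.page e = i}

/-- A book embedding: no two edges on a common page cross. -/
def IsBook : Prop :=
  ∀ e₁ ∈ G.edgeSet, ∀ e₂ ∈ G.edgeSet, L.page e₁ = L.page e₂ → ¬ Crosses L.pos e₁ e₂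

/-- A `k`-local embedding: every vertex has incident edges on at most `k` pages. -/
noncomputable def IsLocal (k : ℕ) : Prop := ∀ v : V, (L.pagesAt v).ncard ≤ k

/-- A union embedding: any two edges lying on the same page and in the same
connected component of that page do not cross. -/
def IsUnion : Prop :=
  ∀ e₁ ∈ G.edgeSet, ∀ e₂ ∈ G.edgeSet, L.page e₁ = L.page e₂ →
    (∃ u v, u ∈ e₁ ∧ v ∈ e₂ ∧ (L.pageGraph (L.page e₁)).Reachable u v) →
    ¬ Crosses L.pos e₁ e₂

/-- A forest embedding: the edges of each page form a forest. -/
def IsForestEmbedding : Prop := ∀ i : ℕ, (L.pageGraph i).IsAcyclic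

end LinearEmbedding

/-- The (classical) page number of `G`. -/
noncomputable def pn {V : Type*} (G : SimpleGraph V) : ℕ :=
  sInf {k | ∃ L : LinearEmbedding G, L.IsBook ∧ L.pageCount ≤ k}

/-- The local page number of `G`. -/
noncomputable def pnLoc {V : Type*} (G : SimpleGraph V) : ℕ :=
  sInf {k | ∃ L : LinearEmbedding G, L.IsBook ∧ L.IsLocal k}

/-- The union page number of `G`. -/
noncomputable def pnUnion {V : Type*} (G : SimpleGraph V) : ℕ :=
  sInf {k | ∃ L : LinearEmbedding G, L.IsUnion ∧ L.pageCount ≤ k}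

/-- The maximum average degree of `G`. -/
noncomputable def mad {V : Type*} (G : SimpleGraph V) : ℝ :=
  sSup {x : ℝ | ∃ H : G.Subgraph, H.verts.Nonempty ∧
    x = 2 * H.edgeSet.ncard / H.verts.ncard}

attribute [local instance] Classical.propDecidable

/-! ### Basic lemmas about crossings -/

section Crossings

variable {V : Type*}

lemma not_crosses_of_mem {pos : V → ℕ} (hinj : Function.Injective pos) {e₁ e₂ : Sym2 V}
    {w : V} (h₁ : w ∈ e₁) (h₂ : w ∈ e₂) : ¬ Crosses pos e₁ e₂ := by
  rintro ⟨a, b, c, d, rfl, rfl, hab, hbc, hcd⟩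
  rw [Sym2.mem_iff] at h₁ h₂
  rcases h₁ with rfl | rfl <;> rcases h₂ with rfl | rfl <;> omega

end Crossings

/-! ### Graphs from finite edge sets -/

section SgOf

variable {V : Type*}

/-- The simple graph on `V` determined by a finite set of (unordered) edges. -/
def sgOf (s : Finset (Sym2 V)) : SimpleGraph V := SimpleGraph.fromEdgeSet ↑s

lemma sgOf_adj {s : Finset (Sym2 V)} {x y : V} :
    (sgOf s).Adj x y ↔ s(x, y) ∈ s ∧ x ≠ y := by
  simp [sgOf]

lemma sgOf_mono {s t : Finset (Sym2 V)} (h : s ⊆ t) : sgOf s ≤ sgOf t :=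
  SimpleGraph.fromEdgeSet_mono (by exact_mod_cast h)

lemma mem_of_mem_edges_sgOf {s : Finset (Sym2 V)} {u v : V} {e : Sym2 V}
    {w : (sgOf s).Walk u v} (he : e ∈ w.edges) : e ∈ s := by
  have := w.edges_subset_edgeSet he
  rw [sgOf, SimpleGraph.edgeSet_fromEdgeSet] at this
  exact this.1

lemma isAcyclic_mono {G H : SimpleGraph V} (h : G ≤ H) (hH : H.IsAcyclic) : G.IsAcyclic := by
  intro v c hc
  exact hH (c.mapLe h) (hc.mapLe h)

lemma sgOf_empty_acyclic : (sgOf (∅ : Finset (Sym2 V))).IsAcyclic := by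
  intro v c hc
  cases c with
  | nil => exact hc.ne_nil rfl
  | cons h q => rw [sgOf_adj] at h; simp at h

lemma reachable_of_adj_imp {A B : SimpleGraph V} (h : ∀ u v, A.Adj u v → B.Reachable u v)
    {u v : V} (hr : A.Reachable u v) : B.Reachable u v := by
  obtain ⟨w⟩ := hr
  induction w with
  | nil => exact Reachable.refl _
  | cons ha _ ih => exact (h _ _ ha).trans ih

lemma reachable_transfer {s t : Finset (Sym2 V)} {u v : V} (w : (sgOf s).Walk u v)
    (h : ∀ e ∈ w.edges, e ∈ t) : (sgOf t).Reachable u v := by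
  induction w with
  | nil => exact Reachable.refl _
  | cons ha w' ih =>
      refine (SimpleGraph.Adj.reachable ?_).trans (ih fun e he => h e (by simp [he]))
      exact sgOf_adj.2 ⟨h _ (by simp), ha.ne⟩

end SgOf

/-! ### Forest surgery lemmas -/

section Forest

variable {V : Type*}

/-- Splitting a path at an edge: both sides remain connected after deleting the edge. -/
lemma wsplit {s : Finset (Sym2 V)} {x y x' y' : V} (p : (sgOf s).Walk x y) (hp : p.IsPath)
    (he : s(x', y') ∈ p.edges) :
    ((sgOf (s.erase s(x', y'))).Reachable x x' ∧ (sgOf (s.erase s(x', y'))).Reachable y' y) ∨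
    ((sgOf (s.erase s(x', y'))).Reachable x y' ∧ (sgOf (s.erase s(x', y'))).Reachable x' y) := by
  induction p with
  | nil => simp at he
  | @cons a b c ha q ih =>
    rw [SimpleGraph.Walk.edges_cons, List.mem_cons] at he
    have hq : q.IsPath := hp.of_cons
    have hhead : s(a, b) ∉ q.edges := by
      have hnd := hp.edges_nodup
      rw [SimpleGraph.Walk.edges_cons] at hnd
      exact (List.nodup_cons.mp hnd).1
    rcases he with heq | he
    · have hq' : (sgOf (s.erase s(x', y'))).Reachable b c := by
        refine reachable_transfer q fun e hee => Finset.mem_erase.2 ⟨?_, mem_of_mem_edges_sgOf hee⟩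
        rintro rfl
        exact hhead (heq ▸ hee)
      rw [Sym2.eq_iff] at heq
      rcases heq with ⟨rfl, rfl⟩ | ⟨rfl, rfl⟩
      · exact Or.inl ⟨Reachable.refl _, hq'⟩
      · exact Or.inr ⟨Reachable.refl _, hq'⟩
    · have hne : s(a, b) ≠ s(x', y') := fun h => hhead (h ▸ he)
      have hab : (sgOf (s.erase s(x', y'))).Adj a b :=
        sgOf_adj.2 ⟨Finset.mem_erase.2 ⟨hne, (sgOf_adj.1 ha).1⟩, ha.ne⟩
      rcases ih hq he with ⟨h1, h2⟩ | ⟨h1, h2⟩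
      · exact Or.inl ⟨hab.reachable.trans h1, h2⟩
      · exact Or.inr ⟨hab.reachable.trans h1, h2⟩

/-- Adding an edge between two non-connected vertices of a forest keeps it a forest. -/
lemma acyclic_insert {s : Finset (Sym2 V)} (ha : (sgOf s).IsAcyclic) {x y : V} (hxy : x ≠ y)
    (hreach : ¬(sgOf s).Reachable x y) : (sgOf (insert s(x, y) s)).IsAcyclic := by
  intro v c hc
  by_cases hec : s(x, y) ∈ c.edges
  · have h2 : (sgOf (insert s(x, y) s) \ SimpleGraph.fromEdgeSet {s(x, y)}).Reachable x y :=
      (SimpleGraph.adj_and_reachable_delete_edges_iff_exists_cycle.2 ⟨v, c, hc, hec⟩).2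
    refine hreach (Reachable.mono ?_ h2)
    intro u w huw
    rw [SimpleGraph.sdiff_adj, sgOf_adj, SimpleGraph.fromEdgeSet_adj] at huw
    obtain ⟨⟨hmem, hne⟩, hnot⟩ := huw
    rw [Finset.mem_insert] at hmem
    rcases hmem with h | h
    · exact absurd ⟨h ▸ rfl, hne⟩ hnot
    · exact sgOf_adj.2 ⟨h, hne⟩
  · refine ha (v := v) (c.transfer (sgOf s) fun e hee => ?_) (hc.transfer _)
    have h1 := c.edges_subset_edgeSet hee
    rw [sgOf, SimpleGraph.edgeSet_fromEdgeSet] at h1 ⊢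
    refine ⟨?_, h1.2⟩
    have := h1.1
    rw [Finset.coe_insert, Set.mem_insert_iff] at this
    rcases this with h | h
    · exact absurd (h ▸ hee) hec
    · exact h

/-- The fundamental exchange: in a forest, adding an edge `xy` whose endpoints are
joined by a path `p` and removing an edge of `p` yields a forest with the same
connectivity relation. -/
lemma swap_spec {s : Finset (Sym2 V)} (ha : (sgOf s).IsAcyclic) {x y x' y' : V} (hxy : x ≠ y)
    (hxs : s(x, y) ∉ s) (p : (sgOf s).Walk x y) (hp : p.IsPath) (he : s(x', y') ∈ p.edges) :
    (sgOf (insert s(x, y) (s.erase s(x', y')))).IsAcyclic ∧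
      (∀ u v : V, (sgOf (insert s(x, y) (s.erase s(x', y')))).Reachable u v ↔
        (sgOf s).Reachable u v) := by
  classical
  set s' : Finset (Sym2 V) := insert s(x, y) (s.erase s(x', y')) with hs'
  have hxy_reach : (sgOf s).Reachable x y := ⟨p⟩
  have he's : s(x', y') ∈ s := mem_of_mem_edges_sgOf he
  -- x and y are not connected after deleting e'
  have hne' : ¬(sgOf (s.erase s(x', y'))).Reachable x y := by
    rintro ⟨w⟩
    set q := (w.toPath : (sgOf (s.erase s(x', y'))).Walk x y) with hqdef
    have hq : q.IsPath := w.toPath.2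
    have hsub : ∀ e ∈ q.edges, e ∈ (sgOf s).edgeSet := by
      intro e hee
      have h1 := q.edges_subset_edgeSet hee
      rw [sgOf, SimpleGraph.edgeSet_fromEdgeSet] at h1 ⊢
      exact ⟨Finset.mem_of_mem_erase (by exact_mod_cast h1.1), h1.2⟩
    have hq' : (q.transfer (sgOf s) hsub).IsPath := hq.transfer hsub
    have hpq : p = q.transfer (sgOf s) hsub :=
      congrArg Subtype.val (ha.path_unique ⟨p, hp⟩ ⟨q.transfer (sgOf s) hsub, hq'⟩)
    have hmem : s(x', y') ∈ q.edges := by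
      rw [hpq, SimpleGraph.Walk.edges_transfer] at he
      exact he
    exact Finset.notMem_erase _ _ (mem_of_mem_edges_sgOf hmem)
  have hsplit := wsplit p hp he
  have hexy : (sgOf s').Adj x y := sgOf_adj.2 ⟨Finset.mem_insert_self _ _, hxy⟩
  have hle1 : sgOf (s.erase s(x', y')) ≤ sgOf s' :=
    sgOf_mono (fun e heo => Finset.mem_insert_of_mem heo)
  -- x' and y' remain connected in s'
  have hx'y' : (sgOf s').Reachable x' y' := by
    rcases hsplit with ⟨h1, h2⟩ | ⟨h1, h2⟩
    · exact ((h1.mono hle1).symm.trans hexy.reachable).trans (h2.mono hle1).symm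
    · exact ((h2.mono hle1).trans hexy.reachable.symm).trans (h1.mono hle1)
  have hrel : ∀ u v : V, (sgOf s').Reachable u v ↔ (sgOf s).Reachable u v := by
    intro u v
    constructor
    · refine reachable_of_adj_imp (fun a b hab => ?_)
      rw [sgOf_adj, hs', Finset.mem_insert] at hab
      obtain ⟨hm | hm, hne⟩ := hab
      · rw [Sym2.eq_iff] at hm
        rcases hm with ⟨rfl, rfl⟩ | ⟨rfl, rfl⟩
        · exact hxy_reach
        · exact hxy_reach.symm
      · exact (SimpleGraph.Adj.reachable (sgOf_adj.2 ⟨Finset.mem_of_mem_erase hm, hne⟩))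
    · refine reachable_of_adj_imp (fun a b hab => ?_)
      rw [sgOf_adj] at hab
      obtain ⟨hm, hne⟩ := hab
      by_cases hcase : s(a, b) = s(x', y')
      · rw [Sym2.eq_iff] at hcase
        rcases hcase with ⟨rfl, rfl⟩ | ⟨rfl, rfl⟩
        · exact hx'y'
        · exact hx'y'.symm
      · exact (SimpleGraph.Adj.reachable
          (sgOf_adj.2 ⟨Finset.mem_insert_of_mem (Finset.mem_erase.2 ⟨hcase, hm⟩), hne⟩))
  refine ⟨?_, hrel⟩
  intro v c hc
  by_cases hec : s(x, y) ∈ c.edges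
  · have h2 : (sgOf s' \ SimpleGraph.fromEdgeSet {s(x, y)}).Reachable x y :=
      (SimpleGraph.adj_and_reachable_delete_edges_iff_exists_cycle.2 ⟨v, c, hc, hec⟩).2
    refine hne' (Reachable.mono ?_ h2)
    intro a b hab
    rw [SimpleGraph.sdiff_adj, sgOf_adj, SimpleGraph.fromEdgeSet_adj, hs',
      Finset.mem_insert] at hab
    obtain ⟨⟨hm | hm, hne⟩, hnot⟩ := hab
    · exact absurd ⟨hm ▸ rfl, hne⟩ hnot
    · exact sgOf_adj.2 ⟨hm, hne⟩
  · have hacyc : (sgOf (s.erase s(x', y'))).IsAcyclic :=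
      isAcyclic_mono (sgOf_mono (Finset.erase_subset _ _)) ha
    refine hacyc (v := v) (c.transfer (sgOf (s.erase s(x', y'))) fun e hee => ?_) (hc.transfer _)
    have h1 := c.edges_subset_edgeSet hee
    rw [sgOf, SimpleGraph.edgeSet_fromEdgeSet] at h1 ⊢
    refine ⟨?_, h1.2⟩
    have := h1.1
    rw [hs', Finset.coe_insert, Set.mem_insert_iff] at this
    rcases this with h | h
    · exact absurd (h ▸ hee) hec
    · exact h

/-- Every nonempty forest has a leaf. -/
lemma exists_leaf [Fintype V] {s : Finset (Sym2 V)} (hd : ∀ e ∈ s, ¬e.IsDiag)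
    (ha : (sgOf s).IsAcyclic) (hne : s.Nonempty) :
    ∃ x w : V, x ≠ w ∧ s(x, w) ∈ s ∧ ∀ e ∈ s, x ∈ e → e = s(x, w) := by
  classical
  obtain ⟨a, b, hes⟩ : ∃ a b, s(a, b) ∈ s := by
    obtain ⟨e, hes⟩ := hne
    revert hes
    exact Sym2.ind (fun a b h => ⟨a, b, h⟩) e
  have hab : a ≠ b := fun h => hd _ hes (by rw [Sym2.mk_isDiag_iff]; exact h)
  set P : ℕ → Prop := fun m => ∃ (u v : V) (p : (sgOf s).Walk u v), p.IsPath ∧ p.length = m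
    with hP
  have hP1 : P 1 := ⟨a, b, .cons (sgOf_adj.2 ⟨hes, hab⟩) .nil, by simp [hab], by simp⟩
  have h1n : 1 ≤ Fintype.card V := by
    have : Nonempty V := ⟨a⟩
    exact Fintype.card_pos
  set m := Nat.findGreatest P (Fintype.card V) with hm
  have hPm : P m := Nat.findGreatest_spec h1n hP1
  have hm1 : 1 ≤ m := Nat.le_findGreatest h1n hP1
  obtain ⟨u, v, p, hp, hlen⟩ := hPm
  have hpne : u ≠ v := by
    rintro rfl
    have hnd := hp.support_nodup
    cases p with
    | nil => simp at hlen; omega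
    | cons h q =>
        rw [SimpleGraph.Walk.support_cons] at hnd
        exact ((List.nodup_cons.mp hnd).1 (q.end_mem_support)).elim
  obtain ⟨w, hadj, q, rfl⟩ := SimpleGraph.Walk.exists_eq_cons_of_ne hpne p
  refine ⟨u, w, hadj.ne, (sgOf_adj.1 hadj).1, ?_⟩
  intro e hesm hue
  obtain ⟨z, rfl⟩ : ∃ z, e = s(u, z) := by
    refine ⟨Sym2.Mem.other hue, ?_⟩
    exact (Sym2.other_spec hue).symm
  have hzu : z ≠ u := by
    intro h
    exact hd _ hesm (by rw [h, Sym2.mk_isDiag_iff])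
  by_cases hzw : z = w
  · rw [hzw]
  · exfalso
    have hadjz : (sgOf s).Adj z u := (sgOf_adj.2 ⟨by rwa [Sym2.eq_swap], hzu⟩)
    by_cases hzs : z ∈ (SimpleGraph.Walk.cons hadj q).support
    · -- z on the path: produces a cycle
      have hzq : z ∈ q.support := by
        rw [SimpleGraph.Walk.support_cons, List.mem_cons] at hzs
        rcases hzs with h | h
        · exact absurd h hzu
        · exact h
      have hq : q.IsPath := hp.of_cons
      have hr : (q.takeUntil z hzq).IsPath := hq.takeUntil hzq
      have huq : u ∉ q.support := by
        have := hp
        rw [SimpleGraph.Walk.cons_isPath_iff] at this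
        exact this.2
      have hur : u ∉ (q.takeUntil z hzq).support :=
        fun h => huq (SimpleGraph.Walk.support_takeUntil_subset _ _ h)
      have hcyc : (SimpleGraph.Walk.cons hadjz (SimpleGraph.Walk.cons hadj
          (q.takeUntil z hzq))).IsCycle := by
        rw [SimpleGraph.Walk.cons_isCycle_iff]
        constructor
        · rw [SimpleGraph.Walk.cons_isPath_iff]
          exact ⟨hr, hur⟩
        · intro hmem
          rw [SimpleGraph.Walk.edges_cons, List.mem_cons] at hmem
          rcases hmem with h | h
          · rw [Sym2.eq_iff] at h
            rcases h with ⟨h1, h2⟩ | ⟨h1, h2⟩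
            · exact hzu h1
            · exact hzw h1
          · exact hur (SimpleGraph.Walk.snd_mem_support_of_mem_edges _ h)
      exact ha _ hcyc
    · -- z not on the path: extend the path, contradicting maximality
      have hext : (SimpleGraph.Walk.cons hadjz (SimpleGraph.Walk.cons hadj q)).IsPath := by
        rw [SimpleGraph.Walk.cons_isPath_iff]
        exact ⟨hp, hzs⟩
      have hlt : (SimpleGraph.Walk.cons hadjz (SimpleGraph.Walk.cons hadj q)).length
          ≤ Fintype.card V := le_of_lt hext.length_lt
      have hPext : P ((SimpleGraph.Walk.cons hadjz (SimpleGraph.Walk.cons hadj q)).length) :=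
        ⟨z, v, _, hext, rfl⟩
      have := Nat.le_findGreatest hlt hPext
      rw [SimpleGraph.Walk.length_cons, hlen] at this
      omega

/-- A leaf is not an interior vertex of any path. -/
lemma not_interior [DecidableEq V] {s : Finset (Sym2 V)} {a b x w : V}
    (hleaf : ∀ e ∈ s, x ∈ e → e = s(x, w)) (p : (sgOf s).Walk a b) (hp : p.IsPath)
    (hxa : x ≠ a) (hxb : x ≠ b) : x ∉ p.support := by
  intro hx
  have hq : (p.takeUntil x hx).IsPath := hp.takeUntil hx
  have hr : (p.dropUntil x hx).IsPath := hp.dropUntil hx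
  obtain ⟨t₁, hadj₁, q₁, hq₁⟩ :=
    SimpleGraph.Walk.exists_eq_cons_of_ne hxa (p.takeUntil x hx).reverse
  obtain ⟨t₂, hadj₂, q₂, hq₂⟩ :=
    SimpleGraph.Walk.exists_eq_cons_of_ne hxb (p.dropUntil x hx)
  have he₁ : s(x, t₁) ∈ (p.takeUntil x hx).edges := by
    have : s(x, t₁) ∈ (p.takeUntil x hx).reverse.edges := by
      rw [hq₁, SimpleGraph.Walk.edges_cons]
      exact List.mem_cons_self
    rwa [SimpleGraph.Walk.edges_reverse, List.mem_reverse] at this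
  have he₂ : s(x, t₂) ∈ (p.dropUntil x hx).edges := by
    rw [hq₂, SimpleGraph.Walk.edges_cons]
    exact List.mem_cons_self
  have heq₁ : s(x, t₁) = s(x, w) :=
    hleaf _ (mem_of_mem_edges_sgOf (w := p.takeUntil x hx) he₁) (Sym2.mem_mk_left _ _)
  have heq₂ : s(x, t₂) = s(x, w) :=
    hleaf _ (mem_of_mem_edges_sgOf (w := p.dropUntil x hx) he₂) (Sym2.mem_mk_left _ _)
  have hnd : (p.edges).Nodup := hp.edges_nodup
  rw [← SimpleGraph.Walk.take_spec p hx, SimpleGraph.Walk.edges_append] at hnd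
  exact List.disjoint_of_nodup_append hnd (heq₁ ▸ he₁) (heq₂ ▸ he₂)

/-- A connected forest spanning a vertex set `U` has at least `|U| - 1` edges. -/
lemma card_le_card_of_connected [Fintype V] {U : Finset V} {s : Finset (Sym2 V)}
    (hd : ∀ e ∈ s, ¬e.IsDiag) (ha : (sgOf s).IsAcyclic)
    (hin : ∀ e ∈ s, ∀ v ∈ e, v ∈ U)
    (hconn : ∀ u ∈ U, ∀ v ∈ U, (sgOf s).Reachable u v) :
    U.card ≤ s.card + 1 := by
  classical
  suffices H : ∀ (n : ℕ) (s : Finset (Sym2 V)) (U : Finset V), s.card ≤ n →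
      (∀ e ∈ s, ¬e.IsDiag) → (sgOf s).IsAcyclic → (∀ e ∈ s, ∀ v ∈ e, v ∈ U) →
      (∀ u ∈ U, ∀ v ∈ U, (sgOf s).Reachable u v) → U.card ≤ s.card + 1 by
    exact H s.card s U le_rfl hd ha hin hconn
  intro n
  induction n with
  | zero =>
    intro s U hcard hd ha hin hconn
    have hs : s = ∅ := Finset.card_eq_zero.mp (Nat.le_zero.mp hcard)
    subst hs
    refine le_trans (Finset.card_le_one.2 fun u hu v hv => ?_) (by simp)
    obtain ⟨w⟩ := hconn u hu v hv
    cases w with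
    | nil => rfl
    | cons h q => simp [sgOf_adj] at h
  | succ n ih =>
    intro s U hcard hd ha hin hconn
    by_cases hU1 : U.card ≤ 1
    · omega
    rcases Finset.eq_empty_or_nonempty s with rfl | hsne
    · exfalso
      obtain ⟨u, hu, v, hv, huv⟩ := Finset.one_lt_card.mp (show 1 < U.card by omega)
      obtain ⟨w⟩ := hconn u hu v hv
      cases w with
      | nil => exact huv rfl
      | cons h q => simp [sgOf_adj] at h
    obtain ⟨x, wl, hxw, hxws, hleaf⟩ := exists_leaf hd ha hsne
    have hxU : x ∈ U := hin _ hxws _ (Sym2.mem_mk_left _ _)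
    have hsub : s.erase s(x, wl) ⊆ s := Finset.erase_subset _ _
    have hd' : ∀ e ∈ s.erase s(x, wl), ¬e.IsDiag := fun e he => hd e (hsub he)
    have ha' : (sgOf (s.erase s(x, wl))).IsAcyclic := isAcyclic_mono (sgOf_mono hsub) ha
    have hin' : ∀ e ∈ s.erase s(x, wl), ∀ v ∈ e, v ∈ U.erase x := by
      intro e he v hv
      refine Finset.mem_erase.2 ⟨?_, hin _ (hsub he) _ hv⟩
      rintro rfl
      exact (Finset.mem_erase.1 he).1 (hleaf _ (hsub he) hv)
    have hconn' : ∀ u ∈ U.erase x, ∀ v ∈ U.erase x,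
        (sgOf (s.erase s(x, wl))).Reachable u v := by
      intro u hu v hv
      obtain ⟨w⟩ := hconn u (Finset.mem_of_mem_erase hu) v (Finset.mem_of_mem_erase hv)
      have hp : (w.toPath : (sgOf s).Walk u v).IsPath := w.toPath.2
      have hxs : x ∉ (w.toPath : (sgOf s).Walk u v).support :=
        not_interior hleaf _ hp (fun h => (Finset.mem_erase.1 hu).1 h.symm)
          (fun h => (Finset.mem_erase.1 hv).1 h.symm)
      refine reachable_transfer (w.toPath : (sgOf s).Walk u v) fun e he => ?_
      refine Finset.mem_erase.2 ⟨?_, mem_of_mem_edges_sgOf he⟩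
      rintro rfl
      exact hxs (SimpleGraph.Walk.fst_mem_support_of_mem_edges _ he)
    have hkey := ih (s.erase s(x, wl)) (U.erase x)
      (by rw [Finset.card_erase_of_mem hxws]; omega) hd' ha' hin' hconn'
    rw [Finset.card_erase_of_mem hxws] at hkey
    rw [Finset.card_erase_of_mem hxU] at hkey
    have hspos : 0 < s.card := Finset.card_pos.2 hsne
    omega

/-- A forest admits a vertex order in which its edges pairwise do not cross. -/
lemma exists_noncross_order [Fintype V] {s : Finset (Sym2 V)} (hd : ∀ e ∈ s, ¬e.IsDiag)
    (ha : (sgOf s).IsAcyclic) :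
    ∃ pos : V → ℕ, Function.Injective pos ∧ ∀ e₁ ∈ s, ∀ e₂ ∈ s, ¬Crosses pos e₁ e₂ := by
  classical
  suffices H : ∀ (n : ℕ) (s : Finset (Sym2 V)), s.card ≤ n → (∀ e ∈ s, ¬e.IsDiag) →
      (sgOf s).IsAcyclic →
      ∃ pos : V → ℕ, Function.Injective pos ∧ ∀ e₁ ∈ s, ∀ e₂ ∈ s, ¬Crosses pos e₁ e₂ by
    exact H s.card s le_rfl hd ha
  intro n
  induction n with
  | zero =>
    intro s hcard hd ha
    have hs : s = ∅ := Finset.card_eq_zero.mp (Nat.le_zero.mp hcard)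
    subst hs
    exact ⟨fun v => (Fintype.equivFin V) v,
      fun a b h => (Fintype.equivFin V).injective (Fin.val_injective h),
      fun e₁ he₁ => by simp at he₁⟩
  | succ n ih =>
    intro s hcard hd ha
    rcases Finset.eq_empty_or_nonempty s with rfl | hsne
    · exact ⟨fun v => (Fintype.equivFin V) v,
        fun a b h => (Fintype.equivFin V).injective (Fin.val_injective h),
        fun e₁ he₁ => by simp at he₁⟩
    obtain ⟨x, w, hxw, hxws, hleaf⟩ := exists_leaf hd ha hsne
    have hsub : s.erase s(x, w) ⊆ s := Finset.erase_subset _ _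
    obtain ⟨pos', hinj', hnc'⟩ := ih (s.erase s(x, w))
      (by rw [Finset.card_erase_of_mem hxws]; omega)
      (fun e he => hd e (hsub he)) (isAcyclic_mono (sgOf_mono hsub) ha)
    set pos : V → ℕ := fun v => if v = x then 2 * pos' w + 1 else 2 * pos' v with hpos
    have hposx : pos x = 2 * pos' w + 1 := by simp [hpos]
    have hposother : ∀ v, v ≠ x → pos v = 2 * pos' v := fun v hv => by simp [hpos, hv]
    have hposw : pos w = 2 * pos' w := hposother w (Ne.symm hxw)
    refine ⟨pos, ?_, ?_⟩
    · intro u v huv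
      by_cases hu : u = x <;> by_cases hv : v = x
      · rw [hu, hv]
      · rw [hu, hposx, hposother v hv] at huv; omega
      · rw [hv, hposx, hposother u hu] at huv; omega
      · rw [hposother u hu, hposother v hv] at huv
        exact hinj' (by omega)
    · intro e₁ he₁ e₂ he₂ hcr
      obtain ⟨a, b, c, d, rfl, rfl, h1, h2, h3⟩ := hcr
      -- basic memberships
      have hmem : ∀ u v : V, u ≠ x → v ≠ x → (pos u < pos v ↔ pos' u < pos' v) := by
        intro u v hu hv
        rw [hposother u hu, hposother v hv]; omega
      by_cases hE1 : s(a, c) = s(x, w)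
      · -- the leaf edge as e₁
        rw [Sym2.eq_iff] at hE1
        rcases hE1 with ⟨hax, hcw⟩ | ⟨haw, hcx⟩
        · rw [hax, hposx] at h1
          rw [hcw, hposw] at h2
          omega
        · rw [haw, hposw] at h1
          rw [hcx, hposx] at h2
          omega
      by_cases hE2 : s(b, d) = s(x, w)
      · rw [Sym2.eq_iff] at hE2
        rcases hE2 with ⟨hbx, hdw⟩ | ⟨hbw, hdx⟩
        · rw [hbx, hposx] at h2
          rw [hdw, hposw] at h3
          omega
        · rw [hbw, hposw] at h2
          rw [hdx, hposx] at h3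
          omega
      -- neither edge is the leaf edge; all endpoints differ from x
      have hxe : ∀ (u v : V), s(u, v) ∈ s → s(u, v) ≠ s(x, w) → u ≠ x ∧ v ≠ x := by
        intro u v hu hne
        constructor
        · rintro rfl
          exact hne (hleaf _ hu (Sym2.mem_mk_left _ _))
        · rintro rfl
          exact hne (hleaf _ hu (Sym2.mem_mk_right _ _))
      obtain ⟨hax, hcx⟩ := hxe a c he₁ hE1
      obtain ⟨hbx, hdx⟩ := hxe b d he₂ hE2
      refine hnc' _ (Finset.mem_erase.2 ⟨hE1, he₁⟩) _ (Finset.mem_erase.2 ⟨hE2, he₂⟩) ?_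
      exact ⟨a, b, c, d, rfl, rfl, (hmem a b hax hbx).1 h1, (hmem b c hbx hcx).1 h2,
        (hmem c d hcx hdx).1 h3⟩

/-- A forest splits into two star forests. -/
lemma star_split [Fintype V] {s : Finset (Sym2 V)} (hd : ∀ e ∈ s, ¬e.IsDiag)
    (ha : (sgOf s).IsAcyclic) :
    ∃ (cen : Sym2 V → V) (γ : V → Bool),
      (∀ e ∈ s, cen e ∈ e) ∧
      (∀ e ∈ s, ∀ v ∈ e, v ≠ cen e → γ v ≠ γ (cen e)) ∧
      (∀ v : V, ∀ e ∈ s, ∀ f ∈ s, v ∈ e → v ∈ f → v ≠ cen e → v ≠ cen f → e = f) := by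
  classical
  suffices H : ∀ (n : ℕ) (s : Finset (Sym2 V)), s.card ≤ n → (∀ e ∈ s, ¬e.IsDiag) →
      (sgOf s).IsAcyclic →
      ∃ (cen : Sym2 V → V) (γ : V → Bool),
        (∀ e ∈ s, cen e ∈ e) ∧
        (∀ e ∈ s, ∀ v ∈ e, v ≠ cen e → γ v ≠ γ (cen e)) ∧
        (∀ v : V, ∀ e ∈ s, ∀ f ∈ s, v ∈ e → v ∈ f → v ≠ cen e → v ≠ cen f → e = f) by
    exact H s.card s le_rfl hd ha
  intro n
  induction n with
  | zero =>
    intro s hcard hd ha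
    have hs : s = ∅ := Finset.card_eq_zero.mp (Nat.le_zero.mp hcard)
    subst hs
    exact ⟨fun e => (Quot.out e).1, fun _ => false, fun e he => by simp at he,
      fun e he => by simp at he, fun v e he => by simp at he⟩
  | succ n ih =>
    intro s hcard hd ha
    rcases Finset.eq_empty_or_nonempty s with rfl | hsne
    · exact ⟨fun e => (Quot.out e).1, fun _ => false, fun e he => by simp at he,
        fun e he => by simp at he, fun v e he => by simp at he⟩
    obtain ⟨x, w, hxw, hxws, hleaf⟩ := exists_leaf hd ha hsne
    have hsub : s.erase s(x, w) ⊆ s := Finset.erase_subset _ _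
    obtain ⟨cen', γ', hc', hγ', hu'⟩ := ih (s.erase s(x, w))
      (by rw [Finset.card_erase_of_mem hxws]; omega)
      (fun e he => hd e (hsub he)) (isAcyclic_mono (sgOf_mono hsub) ha)
    have hxnot : ∀ e ∈ s.erase s(x, w), x ∉ e := by
      intro e he hx
      exact (Finset.mem_erase.1 he).1 (hleaf _ (hsub he) hx)
    set cen : Sym2 V → V := fun e => if e = s(x, w) then w else cen' e with hcendef
    set γ : V → Bool := fun v => if v = x then !(γ' w) else γ' v with hγdef
    have hcen1 : cen s(x, w) = w := by simp [hcendef]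
    have hcen2 : ∀ e, e ≠ s(x, w) → cen e = cen' e := fun e he => by simp [hcendef, he]
    have hγ1 : γ x = !(γ' w) := by simp [hγdef]
    have hγ2 : ∀ v, v ≠ x → γ v = γ' v := fun v hv => by simp [hγdef, hv]
    refine ⟨cen, γ, ?_, ?_, ?_⟩
    · intro e he
      by_cases hcase : e = s(x, w)
      · rw [hcase, hcen1]; exact Sym2.mem_mk_right _ _
      · rw [hcen2 _ hcase]
        exact hc' _ (Finset.mem_erase.2 ⟨hcase, he⟩)
    · intro e he v hv hne
      by_cases hcase : e = s(x, w)
      · subst hcase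
        rw [hcen1] at hne ⊢
        rw [Sym2.mem_iff] at hv
        rcases hv with rfl | rfl
        · rw [hγ1, hγ2 _ (Ne.symm hxw)]
          exact Bool.not_ne_self _
        · exact absurd rfl hne
      · have hemem : e ∈ s.erase s(x, w) := Finset.mem_erase.2 ⟨hcase, he⟩
        rw [hcen2 _ hcase] at hne ⊢
        have hvx : v ≠ x := fun h => hxnot e hemem (h ▸ hv)
        have hcx : cen' e ≠ x := fun h => hxnot e hemem (h ▸ hc' _ hemem)
        rw [hγ2 _ hvx, hγ2 _ hcx]
        exact hγ' _ hemem _ hv hne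
    · intro v e he f hf hve hvf hnce hncf
      by_cases hcase : e = s(x, w) <;> by_cases hcase2 : f = s(x, w)
      · rw [hcase, hcase2]
      · exfalso
        subst hcase
        rw [hcen1] at hnce
        rw [Sym2.mem_iff] at hve
        rcases hve with rfl | rfl
        · exact hxnot f (Finset.mem_erase.2 ⟨hcase2, hf⟩) hvf
        · exact hnce rfl
      · exfalso
        subst hcase2
        rw [hcen1] at hncf
        rw [Sym2.mem_iff] at hvf
        rcases hvf with rfl | rfl
        · exact hxnot e (Finset.mem_erase.2 ⟨hcase, he⟩) hve
        · exact hncf rfl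
      · rw [hcen2 _ hcase] at hnce
        rw [hcen2 _ hcase2] at hncf
        exact hu' v _ (Finset.mem_erase.2 ⟨hcase, he⟩) _ (Finset.mem_erase.2 ⟨hcase2, hf⟩)
          hve hvf hnce hncf

/-- In a star forest, two edges joined by a walk have the same center. -/
lemma star_reach {t : Finset (Sym2 V)} (cen : Sym2 V → V)
    (hc : ∀ e ∈ t, cen e ∈ e)
    (huniq : ∀ v : V, ∀ e ∈ t, ∀ f ∈ t, v ∈ e → v ∈ f → v ≠ cen e → v ≠ cen f → e = f)
    (hcl : ∀ e ∈ t, ∀ f ∈ t, cen e ∈ f → cen f = cen e)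
    {u v : V} (hr : (sgOf t).Reachable u v) :
    ∀ e₁ ∈ t, u ∈ e₁ → ∀ e₂ ∈ t, v ∈ e₂ → cen e₁ = cen e₂ := by
  have key : ∀ (z : V), ∀ e₁ ∈ t, z ∈ e₁ → ∀ e₂ ∈ t, z ∈ e₂ → cen e₁ = cen e₂ := by
    intro z e₁ h₁ hz₁ e₂ h₂ hz₂
    by_cases hc₁ : z = cen e₁
    · exact (hcl e₁ h₁ e₂ h₂ (hc₁ ▸ hz₂)).symm
    by_cases hc₂ : z = cen e₂
    · exact hcl e₂ h₂ e₁ h₁ (hc₂ ▸ hz₁)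
    · rw [huniq z e₁ h₁ e₂ h₂ hz₁ hz₂ hc₁ hc₂]
  obtain ⟨w⟩ := hr
  induction w with
  | nil =>
    intro e₁ h₁ hu e₂ h₂ hv
    exact key _ e₁ h₁ hu e₂ h₂ hv
  | @cons a b c hadj w' ih =>
    intro e₁ h₁ hu e₂ h₂ hv
    have hf : s(a, b) ∈ t := (sgOf_adj.1 hadj).1
    have step1 : cen e₁ = cen s(a, b) := key a e₁ h₁ hu _ hf (Sym2.mem_mk_left _ _)
    have step2 : cen s(a, b) = cen e₂ := ih _ hf (Sym2.mem_mk_right _ _) e₂ h₂ hv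
    exact step1.trans step2

end Forest

/-! ### The Nash–Williams forest decomposition theorem -/

section NW

variable {V : Type*}

/-- Reachable states of the exchange process for the Nash–Williams theorem. -/
inductive RS {V : Type*} (k : ℕ) (F0 : Fin k → Finset (Sym2 V)) (x0 y0 : V) :
    (Fin k → Finset (Sym2 V)) → V → V → Prop
  | base : RS k F0 x0 y0 F0 x0 y0
  | step {F : Fin k → Finset (Sym2 V)} {x y : V} (hRS : RS k F0 x0 y0 F x y) (i : Fin k)
      {x' y' : V} (p : (sgOf (F i)).Walk x y) (hp : p.IsPath) (he : s(x', y') ∈ p.edges) :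
      RS k F0 x0 y0 (Function.update F i (insert s(x, y) ((F i).erase s(x', y')))) x' y'

theorem nash_williams [Fintype V] (k : ℕ) (E : Finset (Sym2 V)) (hd : ∀ e ∈ E, ¬e.IsDiag)
    (hsp : ∀ S : Finset V, (E.filter fun e => ∀ v ∈ e, v ∈ S).card ≤ k * (S.card - 1)) :
    ∃ col : Sym2 V → ℕ, (∀ e ∈ E, col e < k) ∧
      ∀ i : ℕ, i < k → (sgOf (E.filter fun e => col e = i)).IsAcyclic := by
  classical
  set Valid : (Fin k → Finset (Sym2 V)) → Prop := fun F =>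
    (∀ i, F i ⊆ E) ∧ (∀ i j, i ≠ j → ∀ e ∈ F i, e ∉ F j) ∧ (∀ i, (sgOf (F i)).IsAcyclic)
    with hValiddef
  set tot : (Fin k → Finset (Sym2 V)) → ℕ := fun F => ∑ j, (F j).card with htotdef
  have hfin : {F | Valid F}.Finite := Set.toFinite _
  have hsetne : {F | Valid F}.Nonempty :=
    ⟨fun _ => ∅, fun i => Finset.empty_subset _, fun i j _ e he => by simp at he,
      fun i => sgOf_empty_acyclic⟩
  obtain ⟨F0, hF0mem, hmax'⟩ := Set.Finite.exists_maximalFor tot {F | Valid F} hfin hsetne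
  have hF0v : Valid F0 := hF0mem
  obtain ⟨hsubE0, hdisj0, hacyc0⟩ := hF0v
  have hmax : ∀ F, Valid F → tot F ≤ tot F0 := by
    intro F hF
    by_contra hcon
    push_neg at hcon
    have := hmax' hF (le_of_lt hcon)
    omega
  by_cases hcov : ∀ e ∈ E, ∃ i, e ∈ F0 i
  · -- the maximal family covers: extract the coloring
    refine ⟨fun e => if h : ∃ i, e ∈ F0 i then ((h.choose : Fin k) : ℕ) else 0, ?_, ?_⟩
    · intro e he
      obtain ⟨i, hi⟩ := hcov e he
      have hch : ∃ j, e ∈ F0 j := ⟨i, hi⟩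
      simp only [dif_pos hch]
      exact hch.choose.isLt
    · intro i hik
      have hfe : (E.filter fun e =>
          (if h : ∃ j, e ∈ F0 j then ((h.choose : Fin k) : ℕ) else 0) = i) = F0 ⟨i, hik⟩ := by
        ext e
        simp only [Finset.mem_filter]
        constructor
        · rintro ⟨he, hcoli⟩
          obtain ⟨j, hj⟩ := hcov e he
          have hch : ∃ j, e ∈ F0 j := ⟨j, hj⟩
          rw [dif_pos hch] at hcoli
          have hfin2 : (⟨i, hik⟩ : Fin k) = hch.choose := Fin.ext hcoli.symm
          rw [hfin2]
          exact hch.choose_spec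
        · intro he
          have heE : e ∈ E := hsubE0 _ he
          have hch : ∃ j, e ∈ F0 j := ⟨_, he⟩
          refine ⟨heE, ?_⟩
          rw [dif_pos hch]
          by_contra hne2
          have hnej : hch.choose ≠ ⟨i, hik⟩ := fun h => hne2 (by rw [h])
          exact hdisj0 _ _ hnej _ hch.choose_spec he
      rw [hfe]
      exact hacyc0 ⟨i, hik⟩
  · -- otherwise: derive a contradiction with the sparsity condition
    exfalso
    push_neg at hcov
    obtain ⟨e₀, he₀E, he₀⟩ := hcov
    obtain ⟨x0, y0, he0eq⟩ : ∃ a b, e₀ = s(a, b) := Sym2.ind (fun a b => ⟨a, b, rfl⟩) e₀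
    subst he0eq
    have hx0y0 : x0 ≠ y0 := fun h => hd _ he₀E (by rw [Sym2.mk_isDiag_iff]; exact h)
    -- Invariant 1: validity, total size, uncovered floating edge
    have hInv1 : ∀ F x y, RS k F0 x0 y0 F x y →
        Valid F ∧ tot F = tot F0 ∧ s(x, y) ∈ E ∧ x ≠ y ∧ ∀ i, s(x, y) ∉ F i := by
      intro F x y hRS
      induction hRS with
      | base => exact ⟨⟨hsubE0, hdisj0, hacyc0⟩, rfl, he₀E, hx0y0, he₀⟩
      | @step F x y hRS i x' y' p hp he ih =>
        obtain ⟨⟨hsubE, hdisj, hacyc⟩, htoteq, hEe, hxy, hnotin⟩ := ih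
        have he' : s(x', y') ∈ F i := mem_of_mem_edges_sgOf he
        have hx'y' : x' ≠ y' := (p.adj_of_mem_edges he).ne
        have hswap := swap_spec (hacyc i) hxy (hnotin i) p hp he
        have hins : ∀ e, e ∈ insert s(x, y) ((F i).erase s(x', y')) →
            e = s(x, y) ∨ (e ∈ F i ∧ e ≠ s(x', y')) := by
          intro e hmem
          rcases Finset.mem_insert.1 hmem with h | h
          · exact Or.inl h
          · exact Or.inr ⟨Finset.mem_of_mem_erase h, (Finset.mem_erase.1 h).1⟩
        have hne'' : s(x, y) ≠ s(x', y') := fun h => (hnotin i) (h ▸ he')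
        refine ⟨⟨?_, ?_, ?_⟩, ?_, hsubE i he', hx'y', ?_⟩
        · intro j
          by_cases hji : j = i
          · subst hji
            rw [Function.update_self]
            intro e hmem
            rcases hins e hmem with rfl | ⟨h1, _⟩
            · exact hEe
            · exact hsubE j h1
          · rw [Function.update_of_ne hji]
            exact hsubE j
        · intro j l hjl e hej hel
          by_cases hji : j = i <;> by_cases hli : l = i
          · subst hji; subst hli; exact hjl rfl
          · subst hji
            rw [Function.update_self] at hej
            rw [Function.update_of_ne hli] at hel
            rcases hins e hej with rfl | ⟨h1, _⟩
            · exact hnotin l hel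
            · exact hdisj j l hjl e h1 hel
          · subst hli
            rw [Function.update_of_ne hji] at hej
            rw [Function.update_self] at hel
            rcases hins e hel with rfl | ⟨h1, _⟩
            · exact hnotin j hej
            · exact hdisj l j (fun h => hjl h.symm) e h1 hej
          · rw [Function.update_of_ne hji] at hej
            rw [Function.update_of_ne hli] at hel
            exact hdisj j l hjl e hej hel
        · intro j
          by_cases hji : j = i
          · subst hji
            rw [Function.update_self]
            exact hswap.1
          · rw [Function.update_of_ne hji]
            exact hacyc j
        · -- total size is preserved
          have hcard' : (insert s(x, y) ((F i).erase s(x', y'))).card = (F i).card := by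
            rw [Finset.card_insert_of_notMem
              (fun hmem => (hnotin i) (Finset.mem_of_mem_erase hmem)),
              Finset.card_erase_of_mem he']
            have : 0 < (F i).card := Finset.card_pos.2 ⟨_, he'⟩
            omega
          have hcong : ∀ j, (Function.update F i (insert s(x, y) ((F i).erase s(x', y'))) j).card
              = Function.update (fun j => (F j).card) i (F i).card j := by
            intro j
            by_cases hji : j = i
            · subst hji
              rw [Function.update_self, Function.update_self, hcard']
            · rw [Function.update_of_ne hji, Function.update_of_ne hji]
          calc tot (Function.update F i (insert s(x, y) ((F i).erase s(x', y'))))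
              = ∑ j, Function.update (fun j => (F j).card) i (F i).card j :=
                Finset.sum_congr rfl (fun j _ => hcong j)
            _ = tot F := by
                rw [Finset.sum_update_of_mem (Finset.mem_univ i)]
                have h2 : tot F = ∑ j ∈ Finset.univ.erase i, (F j).card + (F i).card :=
                  (Finset.sum_erase_add _ _ (Finset.mem_univ i)).symm
                rw [h2, Finset.sdiff_singleton_eq_erase]
                omega
            _ = tot F0 := htoteq
        · -- the new floating edge is uncovered
          intro j
          by_cases hji : j = i
          · subst hji
            rw [Function.update_self]
            intro hmem
            rcases hins _ hmem with h | ⟨_, h⟩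
            · exact hne'' h.symm
            · exact h rfl
          · rw [Function.update_of_ne hji]
            exact fun hmem => hdisj i j (fun h => hji h.symm) _ he' hmem
    -- every floating edge has its ends joined by a path in every forest
    have hpathex : ∀ F x y, RS k F0 x0 y0 F x y → ∀ i : Fin k,
        (sgOf (F i)).Reachable x y := by
      intro F x y hRS i
      obtain ⟨⟨hsubE, hdisj, hacyc⟩, htoteq, hEe, hxy, hnotin⟩ := hInv1 F x y hRS
      by_contra hnr
      have hac := acyclic_insert (hacyc i) hxy hnr
      set F' := Function.update F i (insert s(x, y) (F i)) with hF'
      have hV' : Valid F' := by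
        refine ⟨?_, ?_, ?_⟩
        · intro j
          by_cases hji : j = i
          · subst hji
            rw [hF', Function.update_self]
            intro e hmem
            rcases Finset.mem_insert.1 hmem with rfl | h
            · exact hEe
            · exact hsubE j h
          · rw [hF', Function.update_of_ne hji]; exact hsubE j
        · intro j l hjl e hej hel
          by_cases hji : j = i <;> by_cases hli : l = i
          · subst hji; subst hli; exact hjl rfl
          · subst hji
            rw [hF', Function.update_self] at hej
            rw [hF', Function.update_of_ne hli] at hel
            rcases Finset.mem_insert.1 hej with rfl | h
            · exact hnotin l hel
            · exact hdisj j l hjl e h hel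
          · subst hli
            rw [hF', Function.update_of_ne hji] at hej
            rw [hF', Function.update_self] at hel
            rcases Finset.mem_insert.1 hel with rfl | h
            · exact hnotin j hej
            · exact hdisj l j (fun h2 => hjl h2.symm) e h hej
          · rw [hF', Function.update_of_ne hji] at hej
            rw [hF', Function.update_of_ne hli] at hel
            exact hdisj j l hjl e hej hel
        · intro j
          by_cases hji : j = i
          · subst hji; rw [hF', Function.update_self]; exact hac
          · rw [hF', Function.update_of_ne hji]; exact hacyc j
      have hcard' : (insert s(x, y) (F i)).card = (F i).card + 1 :=
        Finset.card_insert_of_notMem (hnotin i)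
      have hcong : ∀ j, (F' j).card
          = Function.update (fun j => (F j).card) i ((F i).card + 1) j := by
        intro j
        by_cases hji : j = i
        · subst hji
          rw [hF', Function.update_self, Function.update_self, hcard']
        · rw [hF', Function.update_of_ne hji, Function.update_of_ne hji]
      have htot' : tot F' = tot F + 1 := by
        calc tot F' = ∑ j, Function.update (fun j => (F j).card) i ((F i).card + 1) j :=
              Finset.sum_congr rfl (fun j _ => hcong j)
          _ = tot F + 1 := by
              rw [Finset.sum_update_of_mem (Finset.mem_univ i)]
              have h2 : tot F = ∑ j ∈ Finset.univ.erase i, (F j).card + (F i).card :=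
                (Finset.sum_erase_add _ _ (Finset.mem_univ i)).symm
              rw [h2, Finset.sdiff_singleton_eq_erase]
              omega
      have := hmax F' hV'
      omega
    -- the set of floating edges and its span
    set D : Set (Sym2 V) := {e | ∃ F x y, RS k F0 x0 y0 F x y ∧ e = s(x, y)} with hDdef
    set Dfin : Finset (Sym2 V) := (Set.toFinite D).toFinset with hDfin
    set U : Finset V := Dfin.biUnion (fun e => Finset.univ.filter (fun v => v ∈ e)) with hUdef
    have hDmem : ∀ e, e ∈ Dfin ↔ e ∈ D := fun e => Set.Finite.mem_toFinset _
    have hDU : ∀ e ∈ Dfin, ∀ v ∈ e, v ∈ U := fun e he v hv =>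
      Finset.mem_biUnion.2 ⟨e, he, Finset.mem_filter.2 ⟨Finset.mem_univ _, hv⟩⟩
    -- all edges of a connecting path are floating-eligible, hence in D
    have hedgesD : ∀ F x y, RS k F0 x0 y0 F x y → ∀ (i : Fin k) (p : (sgOf (F i)).Walk x y),
        p.IsPath → ∀ e ∈ p.edges, e ∈ D := by
      intro F x y hRS i p hp e he
      obtain ⟨a, b, rfl⟩ : ∃ a b, e = s(a, b) := Sym2.ind (fun a b => ⟨a, b, rfl⟩) e
      exact ⟨_, a, b, RS.step hRS i p hp he, rfl⟩
    -- Invariant 2: the connectivity relation of the U-restricted forests is preserved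
    have hInv2 : ∀ F x y, RS k F0 x0 y0 F x y → ∀ (j : Fin k) (u v : V),
        (sgOf ((F j).filter (fun e => ∀ w ∈ e, w ∈ U))).Reachable u v ↔
        (sgOf ((F0 j).filter (fun e => ∀ w ∈ e, w ∈ U))).Reachable u v := by
      intro F x y hRS
      induction hRS with
      | base => intro j u v; exact Iff.rfl
      | @step F x y hRS i x' y' p hp he ih =>
        intro j u v
        by_cases hji : j = i
        swap
        · rw [Function.update_of_ne hji]
          exact ih j u v
        subst hji
        rw [Function.update_self]
        obtain ⟨⟨hsubE, hdisj, hacyc⟩, htoteq, hEe, hxy, hnotin⟩ := hInv1 F x y hRS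
        have he' : s(x', y') ∈ F j := mem_of_mem_edges_sgOf he
        have hxyD : s(x, y) ∈ Dfin := (hDmem _).2 ⟨F, x, y, hRS, rfl⟩
        have hx'y'D : s(x', y') ∈ Dfin := (hDmem _).2 ⟨_, x', y', RS.step hRS j p hp he, rfl⟩
        have hinUe : ∀ w ∈ s(x, y), w ∈ U := hDU _ hxyD
        have hinUe' : ∀ w ∈ s(x', y'), w ∈ U := hDU _ hx'y'D
        have hpD : ∀ e ∈ p.edges, ∀ w ∈ e, w ∈ U := fun e hee w hw =>
          hDU _ ((hDmem _).2 (hedgesD F x y hRS j p hp e hee)) w hw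
        have hfeq : (insert s(x, y) ((F j).erase s(x', y'))).filter
              (fun e => ∀ w ∈ e, w ∈ U)
            = insert s(x, y) (((F j).filter (fun e => ∀ w ∈ e, w ∈ U)).erase s(x', y')) := by
          ext e
          simp only [Finset.mem_filter, Finset.mem_insert, Finset.mem_erase]
          constructor
          · rintro ⟨h1 | ⟨h1, h2⟩, h3⟩
            · exact Or.inl h1
            · exact Or.inr ⟨h1, h2, h3⟩
          · rintro (rfl | ⟨h1, h2, h3⟩)
            · exact ⟨Or.inl rfl, hinUe⟩
            · exact ⟨Or.inr ⟨h1, h2⟩, h3⟩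
        rw [hfeq]
        -- transfer the path into the restricted forest
        have hsub2 : ∀ e ∈ p.edges, e ∈ (sgOf ((F j).filter (fun e => ∀ w ∈ e, w ∈ U))).edgeSet := by
          intro e hee
          have h1 := p.edges_subset_edgeSet hee
          rw [sgOf, SimpleGraph.edgeSet_fromEdgeSet] at h1 ⊢
          exact ⟨by
            rw [Finset.coe_filter]
            exact ⟨by exact_mod_cast h1.1, hpD e hee⟩, h1.2⟩
        set p' := p.transfer _ hsub2 with hp'def
        have hp' : p'.IsPath := hp.transfer _
        have he2 : s(x', y') ∈ p'.edges := by
          rw [hp'def, SimpleGraph.Walk.edges_transfer]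
          exact he
        have hacf : (sgOf ((F j).filter (fun e => ∀ w ∈ e, w ∈ U))).IsAcyclic :=
          isAcyclic_mono (sgOf_mono (Finset.filter_subset _ _)) (hacyc j)
        have hxynot : s(x, y) ∉ (F j).filter (fun e => ∀ w ∈ e, w ∈ U) :=
          fun hmem => hnotin j (Finset.mem_filter.1 hmem).1
        have hswap := swap_spec hacf hxy hxynot p' hp' he2
        exact (hswap.2 u v).trans (ih j u v)
    -- tightness: floating pairs are joined inside the restricted original forests
    have hTight : ∀ F x y, RS k F0 x0 y0 F x y → ∀ i : Fin k,
        (sgOf ((F0 i).filter (fun e => ∀ w ∈ e, w ∈ U))).Reachable x y := by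
      intro F x y hRS i
      obtain ⟨w⟩ := hpathex F x y hRS i
      set p := (w.toPath : (sgOf (F i)).Walk x y) with hpdef
      have hp : p.IsPath := w.toPath.2
      have hpD : ∀ e ∈ p.edges, e ∈ (F i).filter (fun e => ∀ w ∈ e, w ∈ U) := by
        intro e hee
        exact Finset.mem_filter.2 ⟨mem_of_mem_edges_sgOf hee,
          fun w hw => hDU _ ((hDmem _).2 (hedgesD F x y hRS i p hp e hee)) w hw⟩
      have := reachable_transfer p hpD
      exact (hInv2 F x y hRS i x y).1 this
    -- Invariant 3: all floating endpoints are joined to x0 in the D-graph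
    have hInv3 : ∀ F x y, RS k F0 x0 y0 F x y →
        (sgOf Dfin).Reachable x x0 ∧ (sgOf Dfin).Reachable y x0 := by
      intro F x y hRS
      induction hRS with
      | base =>
        refine ⟨Reachable.refl _, SimpleGraph.Adj.reachable ?_⟩
        exact sgOf_adj.2 ⟨by rw [Sym2.eq_swap]; exact (hDmem _).2 ⟨F0, x0, y0, RS.base, rfl⟩,
          Ne.symm hx0y0⟩
      | @step F x y hRS i x' y' p hp he ih =>
        have hx'supp : x' ∈ p.support := p.fst_mem_support_of_mem_edges he
        have hq : ∀ e ∈ (p.takeUntil x' hx'supp).edges, e ∈ Dfin := by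
          intro e hee
          exact (hDmem _).2 (hedgesD F x y hRS i p hp e
            (SimpleGraph.Walk.edges_takeUntil_subset _ _ hee))
        have hxx' : (sgOf Dfin).Reachable x x' :=
          reachable_transfer (p.takeUntil x' hx'supp) hq
        have hx'x0 : (sgOf Dfin).Reachable x' x0 := hxx'.symm.trans ih.1
        refine ⟨hx'x0, ?_⟩
        have hadj : (sgOf Dfin).Adj y' x' := by
          refine sgOf_adj.2 ⟨?_, (p.adj_of_mem_edges he).ne.symm⟩
          rw [Sym2.eq_swap]
          exact (hDmem _).2 ⟨_, x', y', RS.step hRS i p hp he, rfl⟩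
        exact hadj.reachable.trans hx'x0
    -- all vertices of U are joined to x0 in the restricted original forests
    have hux0 : ∀ i : Fin k, ∀ u ∈ U,
        (sgOf ((F0 i).filter (fun e => ∀ w ∈ e, w ∈ U))).Reachable u x0 := by
      intro i u hu
      obtain ⟨e, heD, hue⟩ := Finset.mem_biUnion.1 hu
      have hue' : u ∈ e := (Finset.mem_filter.1 hue).2
      obtain ⟨F, x, y, hRS, rfl⟩ := (hDmem _).1 heD
      have hxy := hTight F x y hRS i
      have hDtoT : ∀ a b : V, (sgOf Dfin).Adj a b →
          (sgOf ((F0 i).filter (fun e => ∀ w ∈ e, w ∈ U))).Reachable a b := by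
        intro a b hab
        obtain ⟨hmem, hne⟩ := sgOf_adj.1 hab
        obtain ⟨F', x', y', hRS', heq⟩ := (hDmem _).1 hmem
        have h2 := hTight F' x' y' hRS' i
        rw [Sym2.eq_iff] at heq
        rcases heq with ⟨rfl, rfl⟩ | ⟨rfl, rfl⟩
        · exact h2
        · exact h2.symm
      have hxx0 : (sgOf ((F0 i).filter (fun e => ∀ w ∈ e, w ∈ U))).Reachable x x0 :=
        reachable_of_adj_imp hDtoT (hInv3 F x y hRS).1
      rw [Sym2.mem_iff] at hue'
      rcases hue' with rfl | rfl
      · exact hxx0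
      · exact hxy.symm.trans hxx0
    -- counting
    set Ti : Fin k → Finset (Sym2 V) := fun i => (F0 i).filter (fun e => ∀ w ∈ e, w ∈ U)
      with hTidef
    have hTicard : ∀ i, U.card ≤ (Ti i).card + 1 := by
      intro i
      refine card_le_card_of_connected (fun e he => hd _ (hsubE0 i (Finset.mem_filter.1 he).1))
        (isAcyclic_mono (sgOf_mono (Finset.filter_subset _ _)) (hacyc0 i))
        (fun e he v hv => (Finset.mem_filter.1 he).2 v hv) ?_
      intro u hu v hv
      exact (hux0 i u hu).trans (hux0 i v hv).symm
    have he₀D : s(x0, y0) ∈ Dfin := (hDmem _).2 ⟨F0, x0, y0, RS.base, rfl⟩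
    have he₀EU : s(x0, y0) ∈ E.filter (fun e => ∀ w ∈ e, w ∈ U) :=
      Finset.mem_filter.2 ⟨he₀E, hDU _ he₀D⟩
    have hTisub : ∀ i, Ti i ⊆ (E.filter (fun e => ∀ w ∈ e, w ∈ U)).erase s(x0, y0) := by
      intro i e he
      have h1 := Finset.mem_filter.1 he
      refine Finset.mem_erase.2 ⟨?_, Finset.mem_filter.2 ⟨hsubE0 i h1.1, h1.2⟩⟩
      rintro rfl
      exact he₀ i h1.1
    have hTdisj : ∀ i ∈ (Finset.univ : Finset (Fin k)), ∀ j ∈ (Finset.univ : Finset (Fin k)),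
        i ≠ j → Disjoint (Ti i) (Ti j) := by
      intro i _ j _ hij
      rw [Finset.disjoint_left]
      intro e hei hej
      exact hdisj0 i j hij e (Finset.mem_filter.1 hei).1 (Finset.mem_filter.1 hej).1
    have hbigsub : Finset.univ.biUnion Ti ⊆ (E.filter (fun e => ∀ w ∈ e, w ∈ U)).erase s(x0, y0) := by
      intro e he
      obtain ⟨i, _, hei⟩ := Finset.mem_biUnion.1 he
      exact hTisub i hei
    have hsum : ∑ i, (Ti i).card = (Finset.univ.biUnion Ti).card :=
      (Finset.card_biUnion hTdisj).symm
    have hEUineq := hsp U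
    have hEUcard1 : 1 ≤ (E.filter (fun e => ∀ w ∈ e, w ∈ U)).card :=
      Finset.card_pos.2 ⟨_, he₀EU⟩
    have herase : ((E.filter (fun e => ∀ w ∈ e, w ∈ U)).erase s(x0, y0)).card
        = (E.filter (fun e => ∀ w ∈ e, w ∈ U)).card - 1 :=
      Finset.card_erase_of_mem he₀EU
    have hchain : ∑ i, (Ti i).card ≤ (E.filter (fun e => ∀ w ∈ e, w ∈ U)).card - 1 := by
      rw [hsum, ← herase]
      exact Finset.card_le_card hbigsub
    have hlower : k * (U.card - 1) ≤ ∑ i, (Ti i).card := by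
      calc k * (U.card - 1) = ∑ _i : Fin k, (U.card - 1) := by
            rw [Finset.sum_const, Finset.card_univ, Fintype.card_fin, smul_eq_mul]
      _ ≤ ∑ i, (Ti i).card := Finset.sum_le_sum (fun i _ => by
            have := hTicard i
            omega)
    set P := k * (U.card - 1) with hP
    omega

end NW

/-! ### Bounds via `mad` -/

section MadBounds

variable {V : Type*} [Fintype V] [Nonempty V] (G : SimpleGraph V)

lemma mad_bddAbove : BddAbove {x : ℝ | ∃ H : G.Subgraph, H.verts.Nonempty ∧
    x = 2 * H.edgeSet.ncard / H.verts.ncard} := by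
  refine ⟨2 * (Nat.card (Sym2 V)), ?_⟩
  rintro x ⟨H, hne, rfl⟩
  have hv : (1 : ℝ) ≤ H.verts.ncard := by
    have : 0 < H.verts.ncard := (Set.ncard_pos (Set.toFinite _)).2 hne
    exact_mod_cast this
  have he : (H.edgeSet.ncard : ℝ) ≤ Nat.card (Sym2 V) := by
    have h1 : H.edgeSet.ncard ≤ (Set.univ : Set (Sym2 V)).ncard :=
      Set.ncard_le_ncard (Set.subset_univ _) (Set.toFinite _)
    rw [Set.ncard_univ] at h1
    exact_mod_cast h1
  calc 2 * (H.edgeSet.ncard : ℝ) / H.verts.ncard ≤ 2 * (H.edgeSet.ncard : ℝ) / 1 := by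
        apply div_le_div_of_nonneg_left _ _ hv <;> positivity
    _ = 2 * (H.edgeSet.ncard : ℝ) := by ring
    _ ≤ 2 * (Nat.card (Sym2 V)) := by linarith

lemma mad_nonneg' : 0 ≤ mad G := by
  have hmem : (0 : ℝ) ∈ {x : ℝ | ∃ H : G.Subgraph, H.verts.Nonempty ∧
      x = 2 * H.edgeSet.ncard / H.verts.ncard} := by
    refine ⟨G.singletonSubgraph (Classical.arbitrary V), by simp, ?_⟩
    rw [SimpleGraph.edgeSet_singletonSubgraph]
    simp
  exact le_csSup (mad_bddAbove G) hmem

lemma le_mad (H : G.Subgraph) (hne : H.verts.Nonempty) :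
    2 * (H.edgeSet.ncard : ℝ) ≤ mad G * H.verts.ncard := by
  have hx : 2 * (H.edgeSet.ncard : ℝ) / H.verts.ncard ≤ mad G :=
    le_csSup (mad_bddAbove G) ⟨H, hne, rfl⟩
  have hv : (0 : ℝ) < H.verts.ncard := by
    have : 0 < H.verts.ncard := (Set.ncard_pos (Set.toFinite _)).2 hne
    exact_mod_cast this
  calc 2 * (H.edgeSet.ncard : ℝ) = 2 * (H.edgeSet.ncard : ℝ) / H.verts.ncard * H.verts.ncard :=
        (div_mul_cancel₀ _ hv.ne').symm
    _ ≤ mad G * H.verts.ncard := mul_le_mul_of_nonneg_right hx hv.le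

/-- The density bound transferred to finite edge sets with a finite vertex span. -/
lemma edges_span_mad (s : Finset (Sym2 V)) (hs : ∀ e ∈ s, e ∈ G.edgeSet) (S : Finset V)
    (hS : ∀ e ∈ s, ∀ v ∈ e, v ∈ S) (hSne : S.Nonempty) :
    2 * (s.card : ℝ) ≤ mad G * S.card := by
  classical
  let H : G.Subgraph :=
    { verts := ↑S
      Adj := fun a b => s(a, b) ∈ s
      adj_sub := fun h => (G.mem_edgeSet).1 (hs _ h)
      edge_vert := fun h => hS _ h _ (Sym2.mem_mk_left _ _)
      symm := ⟨fun a b h => by show s(b, a) ∈ s; rwa [Sym2.eq_swap]⟩ }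
  have hE : H.edgeSet = ↑s := by
    ext e
    refine Sym2.ind (fun a b => ?_) e
    simp only [SimpleGraph.Subgraph.mem_edgeSet, Finset.mem_coe]
    exact Iff.rfl

  have h1 := le_mad G H (by exact_mod_cast hSne.to_set)
  rw [hE] at h1
  have h2 : (↑s : Set (Sym2 V)).ncard = s.card := Set.ncard_coe_finset _
  have h3 : H.verts.ncard = S.card := Set.ncard_coe_finset _
  rw [h2] at h1
  rw [h3] at h1
  exact h1

/-- Edges inside a vertex set `S` number at most `|S| (|S|-1) / 2`. -/
lemma edges_inside_le (s : Finset (Sym2 V)) (hd : ∀ e ∈ s, ¬Sym2.IsDiag e) (S : Finset V)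
    (hS : ∀ e ∈ s, ∀ v ∈ e, v ∈ S) :
    2 * s.card ≤ S.card * (S.card - 1) := by
  classical
  set T : Finset (V × V) :=
    s.biUnion (fun e => Finset.univ.filter (fun p : V × V => s(p.1, p.2) = e)) with hT
  have hdisj : ∀ e₁ ∈ s, ∀ e₂ ∈ s, e₁ ≠ e₂ →
      Disjoint (Finset.univ.filter (fun p : V × V => s(p.1, p.2) = e₁))
        (Finset.univ.filter (fun p : V × V => s(p.1, p.2) = e₂)) := by
    intro e₁ _ e₂ _ hne
    rw [Finset.disjoint_filter]
    rintro p _ rfl h2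
    exact hne h2
  have hTcard : T.card = 2 * s.card := by
    rw [hT, Finset.card_biUnion hdisj]
    rw [Finset.sum_congr rfl (fun e he => ?_), Finset.sum_const, smul_eq_mul, Nat.mul_comm]
    obtain ⟨a, b, rfl⟩ : ∃ a b, s(a, b) = e := by
      refine Sym2.ind (fun a b => ⟨a, b, rfl⟩) e
    have hab : a ≠ b := fun h => hd _ he (by rw [Sym2.mk_isDiag_iff]; exact h)
    have : Finset.univ.filter (fun p : V × V => s(p.1, p.2) = s(a, b)) = {(a, b), (b, a)} := by
      ext ⟨u, v⟩
      simp only [Finset.mem_filter, Finset.mem_univ, true_and, Finset.mem_insert,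
        Finset.mem_singleton, Sym2.eq_iff, Prod.mk.injEq]
    rw [this]
    rw [Finset.card_insert_of_notMem (by
      simp only [Finset.mem_singleton, Prod.mk.injEq, not_and]
      exact fun h _ => absurd h hab), Finset.card_singleton]
  have hsub : T ⊆ S.offDiag := by
    intro p hp
    rw [hT, Finset.mem_biUnion] at hp
    obtain ⟨e, he, hpe⟩ := hp
    rw [Finset.mem_filter] at hpe
    rw [Finset.mem_offDiag]
    refine ⟨hS _ he _ (hpe.2 ▸ Sym2.mem_mk_left _ _), hS _ he _ (hpe.2 ▸ Sym2.mem_mk_right _ _), ?_⟩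
    intro h
    exact hd _ he (hpe.2 ▸ (by rw [Sym2.mk_isDiag_iff]; exact h))
  have := Finset.card_le_card hsub
  rw [hTcard, Finset.offDiag_card] at this
  have hmul : S.card * (S.card - 1) = S.card * S.card - S.card := by
    cases hc : S.card with
    | zero => simp
    | succ m => rw [Nat.succ_sub_one, Nat.mul_succ, Nat.add_sub_cancel]
  omega

end MadBounds

/-! ### Part 1: the local page number bound -/

section Part1

variable {V : Type*} [Fintype V] [Nonempty V] (G : SimpleGraph V)

theorem exists_head (k : ℕ) (hk : 0 < k) (hmadk : mad G < 2 * k) :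
    ∃ f : {e // e ∈ G.edgeFinset} → V × Fin k,
      Function.Injective f ∧ ∀ e, (f e).1 ∈ e.1 := by
  classical
  have hall : ∀ s : Finset {e // e ∈ G.edgeFinset},
      s.card ≤ (s.biUnion (fun e => (Finset.univ.filter (fun v => v ∈ e.1)) ×ˢ
        (Finset.univ : Finset (Fin k)))).card := by
    intro s
    set S : Finset V := s.biUnion (fun e => Finset.univ.filter (fun v => v ∈ e.1)) with hS
    have hbi : s.biUnion (fun e => (Finset.univ.filter (fun v => v ∈ e.1)) ×ˢ
        (Finset.univ : Finset (Fin k))) = S ×ˢ (Finset.univ : Finset (Fin k)) := by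
      ext ⟨v, j⟩
      simp only [Finset.mem_biUnion, Finset.mem_product, Finset.mem_filter, Finset.mem_univ,
        true_and, and_true, hS]
    rw [hbi, Finset.card_product, Finset.card_univ, Fintype.card_fin]
    rcases s.eq_empty_or_nonempty with rfl | hne
    · simp
    have hSne : S.Nonempty := by
      obtain ⟨e, he⟩ := hne
      obtain ⟨a, b, hab⟩ : ∃ a b, s(a, b) = e.1 := Sym2.ind (fun a b => ⟨a, b, rfl⟩) e.1
      exact ⟨a, Finset.mem_biUnion.2 ⟨e, he, Finset.mem_filter.2 ⟨Finset.mem_univ _,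
        hab ▸ Sym2.mem_mk_left _ _⟩⟩⟩
    have hsmad : 2 * ((s.image Subtype.val).card : ℝ) ≤ mad G * S.card := by
      refine edges_span_mad G _ ?_ S ?_ hSne
      · intro e he
        obtain ⟨⟨e', he'⟩, _, rfl⟩ := Finset.mem_image.1 he
        exact (SimpleGraph.mem_edgeFinset).1 he'
      · intro e he v hv
        obtain ⟨e', hmem, rfl⟩ := Finset.mem_image.1 he
        exact Finset.mem_biUnion.2 ⟨e', hmem, Finset.mem_filter.2 ⟨Finset.mem_univ _, hv⟩⟩
    rw [Finset.card_image_of_injective _ Subtype.val_injective] at hsmad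
    have hScard : (0 : ℝ) < S.card := by
      have := Finset.card_pos.2 hSne
      exact_mod_cast this
    have hreal : (s.card : ℝ) ≤ (S.card : ℝ) * k := by
      nlinarith [mad_nonneg' G]
    have : (s.card : ℝ) ≤ ((S.card * k : ℕ) : ℝ) := by push_cast; exact hreal
    exact_mod_cast this
  obtain ⟨f, hfinj, hfmem⟩ := (Finset.all_card_le_biUnion_card_iff_exists_injective _).1 hall
  refine ⟨f, hfinj, fun e => ?_⟩
  have := hfmem e
  rw [Finset.mem_product] at this
  exact (Finset.mem_filter.1 this.1).2

theorem pnLoc_le_mad : (pnLoc G : ℝ) ≤ mad G / 2 + 2 := by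
  classical
  set k : ℕ := ⌊mad G / 2⌋₊ + 1 with hk
  have hk0 : 0 < k := Nat.succ_pos _
  have hmadhalf : mad G / 2 < k := by
    have := Nat.lt_floor_add_one (mad G / 2)
    exact_mod_cast this
  have hmadk : mad G < 2 * k := by
    have h0 := mad_nonneg' G
    nlinarith
  obtain ⟨f, hfinj, hfmem⟩ := exists_head G k hk0 hmadk
  set pos : V → ℕ := fun v => ((Fintype.equivFin V) v : ℕ) with hpos
  have hposinj : Function.Injective pos :=
    fun a b h => (Fintype.equivFin V).injective (Fin.val_injective h)
  set tl : {e // e ∈ G.edgeFinset} → V := fun e => Sym2.Mem.other (hfmem e) with htl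
  have hspec : ∀ e : {e // e ∈ G.edgeFinset}, s((f e).1, tl e) = e.1 :=
    fun e => Sym2.other_spec (hfmem e)
  have htl_mem : ∀ e : {e // e ∈ G.edgeFinset}, tl e ∈ e.1 :=
    fun e => Sym2.other_mem (hfmem e)
  set L : LinearEmbedding G :=
    { pos := pos
      inj := hposinj
      page := fun e => if h : e ∈ G.edgeFinset then pos (tl ⟨e, h⟩) else 0 } with hL
  have hpage : ∀ (e : Sym2 V) (h : e ∈ G.edgeFinset), L.page e = pos (tl ⟨e, h⟩) :=
    fun e h => dif_pos h
  have hbook : L.IsBook := by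
    intro e₁ h₁ e₂ h₂ hpq
    have hf₁ : e₁ ∈ G.edgeFinset := (SimpleGraph.mem_edgeFinset).2 h₁
    have hf₂ : e₂ ∈ G.edgeFinset := (SimpleGraph.mem_edgeFinset).2 h₂
    rw [hpage e₁ hf₁, hpage e₂ hf₂] at hpq
    have htt : tl ⟨e₁, hf₁⟩ = tl ⟨e₂, hf₂⟩ := hposinj hpq
    exact not_crosses_of_mem hposinj (htl_mem ⟨e₁, hf₁⟩) (htt ▸ htl_mem ⟨e₂, hf₂⟩)
  have hlocal : L.IsLocal (k + 1) := by
    intro v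
    have hsub : L.pagesAt v ⊆ insert (pos v)
        ((fun e => pos (tl e)) '' {e : {e // e ∈ G.edgeFinset} | (f e).1 = v}) := by
      rintro i ⟨e, heS, hv, hpi⟩
      have hf : e ∈ G.edgeFinset := (SimpleGraph.mem_edgeFinset).2 heS
      rw [hpage e hf] at hpi
      have hv' : v ∈ s((f ⟨e, hf⟩).1, tl ⟨e, hf⟩) := (hspec ⟨e, hf⟩).symm ▸ hv
      rw [Sym2.mem_iff] at hv'
      rcases hv' with hv' | hv'
      · exact Set.mem_insert_iff.2 (Or.inr ⟨⟨e, hf⟩, hv'.symm, hpi⟩)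
      · rw [← hv'] at hpi
        exact Set.mem_insert_iff.2 (Or.inl hpi.symm)
    calc (L.pagesAt v).ncard ≤ (insert (pos v)
          ((fun e => pos (tl e)) '' {e : {e // e ∈ G.edgeFinset} | (f e).1 = v})).ncard :=
          Set.ncard_le_ncard hsub (Set.toFinite _)
      _ ≤ ((fun e => pos (tl e)) ''
            {e : {e // e ∈ G.edgeFinset} | (f e).1 = v}).ncard + 1 := Set.ncard_insert_le _ _
      _ ≤ ({e : {e // e ∈ G.edgeFinset} | (f e).1 = v}).ncard + 1 := by
          have := Set.ncard_image_le (f := fun e => pos (tl e))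
            (s := {e : {e // e ∈ G.edgeFinset} | (f e).1 = v}) (Set.toFinite _)
          omega
      _ ≤ k + 1 := by
          have hinj : Set.InjOn (fun e => (f e).2) {e : {e // e ∈ G.edgeFinset} | (f e).1 = v} := by
            intro a ha b hb hab
            apply hfinj
            apply Prod.ext
            · rw [Set.mem_setOf_eq] at ha hb
              rw [ha, hb]
            · exact hab
          have := Set.ncard_le_ncard_of_injOn (fun e => (f e).2)
            (fun a _ => Set.mem_univ ((f a).2)) hinj (Set.toFinite _)
          rw [Set.ncard_univ, Nat.card_eq_fintype_card, Fintype.card_fin] at this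
          omega
  have hmem : (k + 1) ∈ {n | ∃ L : LinearEmbedding G, L.IsBook ∧ L.IsLocal n} :=
    ⟨L, hbook, hlocal⟩
  have hle : pnLoc G ≤ k + 1 := Nat.sInf_le hmem
  have hcast : (pnLoc G : ℝ) ≤ (k : ℝ) + 1 := by exact_mod_cast hle
  have hfloor : (⌊mad G / 2⌋₊ : ℝ) ≤ mad G / 2 := Nat.floor_le (by
    have := mad_nonneg' G; positivity)
  rw [hk] at hcast
  push_cast at hcast
  linarith

end Part1

/-! ### Part 2: the union page number bound -/

section Part2

variable {V : Type*} [Fintype V] [Nonempty V] (G : SimpleGraph V)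

theorem pnUnion_le_mad : (pnUnion G : ℝ) ≤ mad G + 2 := by
  classical
  set M : ℕ := ⌊mad G⌋₊ with hM
  set k : ℕ := (M + 3) / 2 with hk
  have hk1 : 1 ≤ k := by omega
  have h2k : M + 2 ≤ 2 * k := by omega
  have h2k' : 2 * k ≤ M + 3 := by omega
  have hmadM : mad G < (M : ℝ) + 1 := by
    have := Nat.lt_succ_floor (mad G)
    rw [hM]
    exact_mod_cast this
  have hMmad : (M : ℝ) ≤ mad G := Nat.floor_le (mad_nonneg' G)
  have hdE : ∀ e ∈ G.edgeFinset, ¬e.IsDiag := fun e he =>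
    G.not_isDiag_of_mem_edgeSet ((SimpleGraph.mem_edgeFinset).1 he)
  -- the sparsity condition of Nash–Williams
  have hsp : ∀ S : Finset V,
      ((G.edgeFinset).filter fun e => ∀ v ∈ e, v ∈ S).card ≤ k * (S.card - 1) := by
    intro S
    set s := (G.edgeFinset).filter (fun e => ∀ v ∈ e, v ∈ S) with hs
    have hsE : ∀ e ∈ s, e ∈ G.edgeSet := fun e he =>
      (SimpleGraph.mem_edgeFinset).1 (Finset.mem_filter.1 he).1
    have hsS : ∀ e ∈ s, ∀ v ∈ e, v ∈ S := fun e he => (Finset.mem_filter.1 he).2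
    have hsd : ∀ e ∈ s, ¬e.IsDiag := fun e he => hdE _ (Finset.mem_filter.1 he).1
    by_cases hSM : S.card ≤ M
    · -- small sets: the complete-graph bound
      have h1 := edges_inside_le s hsd S hsS
      have h2 : S.card * (S.card - 1) ≤ (2 * k) * (S.card - 1) :=
        Nat.mul_le_mul_right _ (by omega)
      have h3 : (2 * k) * (S.card - 1) = 2 * (k * (S.card - 1)) := by ring
      omega
    · push_neg at hSM
      rcases s.eq_empty_or_nonempty with hse | hsne
      · rw [hse]; simp
      have hSne : S.Nonempty := by
        obtain ⟨e, he⟩ := hsne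
        obtain ⟨a, b, rfl⟩ : ∃ a b, e = s(a, b) := Sym2.ind (fun a b => ⟨a, b, rfl⟩) e
        exact ⟨a, hsS _ he _ (Sym2.mem_mk_left _ _)⟩
      have hmad2 := edges_span_mad G s hsE S hsS hSne
      have hSpos : (0 : ℝ) < S.card := by
        have := Finset.card_pos.2 hSne
        exact_mod_cast this
      have hlt : (2 * s.card : ℝ) < ((M : ℝ) + 1) * S.card := by
        calc (2 * s.card : ℝ) = 2 * (s.card : ℝ) := by push_cast; ring
          _ ≤ mad G * S.card := hmad2
          _ < ((M : ℝ) + 1) * S.card := mul_lt_mul_of_pos_right hmadM hSpos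
      have hnat : 2 * s.card < (M + 1) * S.card := by
        have : (2 * s.card : ℝ) < (((M + 1) * S.card : ℕ) : ℝ) := by push_cast; linarith
        exact_mod_cast this
      obtain ⟨c', hc'⟩ : ∃ c', S.card = c' + 1 :=
        ⟨S.card - 1, by have := Finset.card_pos.2 hSne; omega⟩
      have hMc' : M ≤ c' := by omega
      rw [hc'] at hnat
      rw [hc']
      simp only [Nat.add_sub_cancel]
      have f1 : 2 * s.card < (M + 1) * c' + (M + 1) := by
        have : (M + 1) * (c' + 1) = (M + 1) * c' + (M + 1) := by ring
        omega
      have f2 : (M + 1) * c' + c' ≤ 2 * (k * c') := by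
        have h5 : (M + 2) * c' ≤ (2 * k) * c' := Nat.mul_le_mul_right _ h2k
        have h6 : (M + 1) * c' + c' = (M + 2) * c' := by ring
        have h7 : (2 * k) * c' = 2 * (k * c') := by ring
        omega
      set A := (M + 1) * c' with hA
      set B := k * c' with hB
      omega
  obtain ⟨col, hcol, hforest⟩ := nash_williams k G.edgeFinset hdE hsp
  set Fi : ℕ → Finset (Sym2 V) := fun i => G.edgeFinset.filter (fun e => col e = i) with hFi
  have hFid : ∀ i, ∀ e ∈ Fi i, ¬e.IsDiag := fun i e he => hdE _ (Finset.mem_filter.1 he).1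
  -- the special page: a non-crossing order for forest 0
  obtain ⟨pos, hposinj, hpos0⟩ := exists_noncross_order (hFid 0) (hforest 0 (by omega))
  -- star splits for the other forests
  have hsplitex : ∀ i : ℕ, ∃ (cen : Sym2 V → V) (γ : V → Bool),
      (∀ e ∈ Fi i, cen e ∈ e) ∧
      (∀ e ∈ Fi i, ∀ v ∈ e, v ≠ cen e → γ v ≠ γ (cen e)) ∧
      (∀ v : V, ∀ e ∈ Fi i, ∀ f ∈ Fi i, v ∈ e → v ∈ f → v ≠ cen e → v ≠ cen f → e = f) := by
    intro i
    by_cases hik : i < k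
    · exact star_split (hFid i) (hforest i hik)
    · have hempty : Fi i = ∅ := by
        rw [hFi]
        rw [Finset.filter_eq_empty_iff]
        intro e he hcole
        exact hik (hcole ▸ hcol e he)
      rw [hempty]
      exact ⟨fun e => (Quot.out e).1, fun _ => false, fun e he => by simp at he,
        fun e he => by simp at he, fun v e he => by simp at he⟩
  choose cen γ hcen hγ huniq using hsplitex
  set bit : ℕ → Sym2 V → Bool := fun i e => γ i (cen i e) with hbit
  set pg : Sym2 V → ℕ := fun e =>
    if col e = 0 then 0 else 2 * (col e) - 1 + (if bit (col e) e then 1 else 0) with hpg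
  set L : LinearEmbedding G := ⟨pos, hposinj, pg⟩ with hL
  have hLpage : L.page = pg := rfl
  have hLpos : L.pos = pos := rfl
  -- page values
  have hpg0 : ∀ e, col e = 0 → pg e = 0 := fun e h => by rw [hpg]; simp [h]
  have hpgpos : ∀ e, col e ≠ 0 →
      pg e = 2 * (col e) - 1 + (if bit (col e) e then 1 else 0) := fun e h => by
    rw [hpg]; simp [h]
  -- a common page forces common colour and bit
  have hdet : ∀ e₁ e₂ : Sym2 V, pg e₁ = pg e₂ → col e₁ ≠ 0 →
      col e₂ = col e₁ ∧ bit (col e₂) e₂ = bit (col e₁) e₁ := by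
    intro e₁ e₂ hpq h1
    by_cases h2 : col e₂ = 0
    · rw [hpg0 _ h2, hpgpos _ h1] at hpq
      exfalso
      by_cases hb : bit (col e₁) e₁ <;> simp [hb] at hpq <;> omega
    · rw [hpgpos _ h1, hpgpos _ h2] at hpq
      have hc1 : 1 ≤ col e₁ := Nat.one_le_iff_ne_zero.2 h1
      have hc2 : 1 ≤ col e₂ := Nat.one_le_iff_ne_zero.2 h2
      by_cases hb1 : bit (col e₁) e₁ <;> by_cases hb2 : bit (col e₂) e₂ <;>
        simp [hb1, hb2] at hpq ⊢ <;> omega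
  -- the union property
  have hunion : L.IsUnion := by
    intro e₁ h₁ e₂ h₂ hpq hreach
    rw [hLpage] at hpq
    have hf₁ : e₁ ∈ G.edgeFinset := (SimpleGraph.mem_edgeFinset).2 h₁
    have hf₂ : e₂ ∈ G.edgeFinset := (SimpleGraph.mem_edgeFinset).2 h₂
    by_cases h10 : col e₁ = 0
    · -- both on the special page
      have h20 : col e₂ = 0 := by
        by_contra h20
        obtain ⟨hceq, _⟩ := hdet e₂ e₁ hpq.symm h20
        exact h20 (hceq ▸ h10)
      exact hpos0 e₁ (Finset.mem_filter.2 ⟨hf₁, h10⟩) e₂ (Finset.mem_filter.2 ⟨hf₂, h20⟩)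
    · obtain ⟨hceq, hbeq⟩ := hdet e₁ e₂ hpq h10
      obtain ⟨u, v, hu, hv, hr⟩ := hreach
      set t : Finset (Sym2 V) :=
        (Fi (col e₁)).filter (fun e => bit (col e₁) e = bit (col e₁) e₁) with ht
      have he₁t : e₁ ∈ t :=
        Finset.mem_filter.2 ⟨Finset.mem_filter.2 ⟨hf₁, rfl⟩, rfl⟩
      have he₂t : e₂ ∈ t := by
        refine Finset.mem_filter.2 ⟨Finset.mem_filter.2 ⟨hf₂, hceq⟩, ?_⟩
        conv_lhs => rw [← hceq]
        exact hbeq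
      have hPG : L.pageGraph (L.page e₁) = sgOf t := by
        rw [hLpage]
        have hset : {e | e ∈ G.edgeSet ∧ pg e = pg e₁} = ↑t := by
          ext e
          rw [Set.mem_setOf_eq, Finset.mem_coe, ht, Finset.mem_filter, hFi,
            Finset.mem_filter, SimpleGraph.mem_edgeFinset]
          constructor
          · rintro ⟨heE, hpe⟩
            have hce0 : col e ≠ 0 := by
              intro hce0
              rw [hpg0 _ hce0, hpgpos _ h10] at hpe
              by_cases hb1 : bit (col e₁) e₁ <;> simp [hb1] at hpe <;> omega
            obtain ⟨hA, hB⟩ := hdet e e₁ hpe hce0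
            refine ⟨⟨heE, hA.symm⟩, ?_⟩
            conv_lhs => rw [hA]
            exact hB.symm
          · rintro ⟨⟨heE, hcole⟩, hbite⟩
            refine ⟨heE, ?_⟩
            rw [hpgpos _ (by rw [hcole]; exact h10), hpgpos _ h10, hcole, hbite]
        show SimpleGraph.fromEdgeSet {e | e ∈ G.edgeSet ∧ pg e = pg e₁} = sgOf t
        rw [hset]
        rfl
      rw [hPG] at hr
      have hcl : ∀ e ∈ t, ∀ f ∈ t, cen (col e₁) e ∈ f →
          cen (col e₁) f = cen (col e₁) e := by
        intro e he f hf hcef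
        by_contra hne
        have h1 := hγ (col e₁) f (Finset.mem_filter.1 hf).1 (cen (col e₁) e) hcef
          (fun h => hne h.symm)
        have hbe : bit (col e₁) e = bit (col e₁) e₁ := (Finset.mem_filter.1 he).2
        have hbf : bit (col e₁) f = bit (col e₁) e₁ := (Finset.mem_filter.1 hf).2
        simp only [hbit] at hbe hbf
        rw [hbe, hbf] at h1
        exact h1 rfl
      have hshare := star_reach (cen (col e₁))
        (fun e he => hcen (col e₁) e (Finset.mem_filter.1 he).1)
        (fun w e he f hf hw1 hw2 hw3 hw4 => huniq (col e₁) w e (Finset.mem_filter.1 he).1 f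
          (Finset.mem_filter.1 hf).1 hw1 hw2 hw3 hw4) hcl hr e₁ he₁t hu e₂ he₂t hv
      have hc1 : cen (col e₁) e₁ ∈ e₁ := hcen (col e₁) e₁ (Finset.mem_filter.1 he₁t).1
      have hc2 : cen (col e₁) e₁ ∈ e₂ := by
        rw [hshare]
        exact hcen (col e₁) e₂ (Finset.mem_filter.1 he₂t).1
      rw [hLpos]
      exact not_crosses_of_mem hposinj hc1 hc2
  -- the number of pages
  have hcount : L.pageCount ≤ 2 * k - 1 := by
    have hsubp : L.pages ⊆ ↑(Finset.range (2 * k - 1)) := by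
      rintro i ⟨e, heE, hpe⟩
      have hf : e ∈ G.edgeFinset := (SimpleGraph.mem_edgeFinset).2 heE
      have hcolk := hcol e hf
      rw [hLpage] at hpe
      simp only [Finset.coe_range, Set.mem_Iio]
      by_cases h0 : col e = 0
      · rw [hpg0 _ h0] at hpe
        omega
      · rw [hpgpos _ h0] at hpe
        by_cases hb1 : bit (col e) e <;> simp [hb1] at hpe <;> omega
    calc L.pageCount ≤ (↑(Finset.range (2 * k - 1)) : Set ℕ).ncard :=
          Set.ncard_le_ncard hsubp (Set.toFinite _)
      _ = 2 * k - 1 := by rw [Set.ncard_coe_finset, Finset.card_range]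
  have hmem : (2 * k - 1) ∈ {n | ∃ L : LinearEmbedding G, L.IsUnion ∧ L.pageCount ≤ n} :=
    ⟨L, hunion, hcount⟩
  have hle : pnUnion G ≤ 2 * k - 1 := Nat.sInf_le hmem
  have hle2 : 2 * k - 1 ≤ M + 2 := by omega
  have hcast : (pnUnion G : ℝ) ≤ (M : ℝ) + 2 := by
    have : pnUnion G ≤ M + 2 := le_trans hle hle2
    exact_mod_cast this
  linarith

end Part2

/-- `pnℓ(G) ≤ mad(G)/2 + 2` and `pnᵤ(G) ≤ mad(G) + 2`. -/
theorem pn_upper_bounds_from_mad {V : Type*} [Fintype V] [Nonempty V]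
    (G : SimpleGraph V) :
    (pnLoc G : ℝ) ≤ mad G / 2 + 2 ∧ (pnUnion G : ℝ) ≤ mad G + 2 :=
  ⟨pnLoc_le_mad G, pnUnion_le_mad G⟩
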